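/- arXiv:1609.05272 — 2 statements merged into one kernel-verified Lean document; each statement's English description precedes it below -/
import Mathlib

section
/- For all n ≥ 4, the sum over k from 0 to n−4 of T_k·(T_{n−k} + T_{n−k−2} + 2·T_{n−k−3} + 3·T_{n−k−4}) equals (n−2)·T_{n−1} − T_{n−2} − 3·T_{n−3}. -/
/-- The Tetranacci numbers. -/
def tetra : ℕ → ℤ
  | 0 => 0
  | 1 => 1
  | 2 => 1
  | 3 => 2
  | n + 4 => tetra (n + 3) + tetra (n + 2) + tetra (n + 1) + tetra n

lemma tetra_add4 (n : ℕ) : tetra (n+4) = tetra (n+3) + tetra (n+2) + tetra (n+1) + tetra n := rfl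

def W (j : ℕ) : ℤ := tetra (j+4) + tetra (j+2) + 2 * tetra (j+1) + 3 * tetra j

lemma W_rec (j : ℕ) : W (j+4) = W (j+3) + W (j+2) + W (j+1) + W j := by
  simp only [W]
  simp only [show j+4+4=j+8 by omega, show j+4+2=j+6 by omega, show j+4+1=j+5 by omega,
    show j+3+4=j+7 by omega, show j+3+2=j+5 by omega, show j+3+1=j+4 by omega,
    show j+2+4=j+6 by omega, show j+2+2=j+4 by omega, show j+2+1=j+3 by omega,
    show j+1+4=j+5 by omega, show j+1+2=j+3 by omega, show j+1+1=j+2 by omega]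
  rw [show j+8=(j+4)+4 by omega, tetra_add4, show j+4+3=j+7 by omega, show j+4+2=j+6 by omega,
    show j+4+1=j+5 by omega,
    show j+7=(j+3)+4 by omega, tetra_add4, show j+3+3=j+6 by omega, show j+3+2=j+5 by omega,
    show j+3+1=j+4 by omega,
    show j+6=(j+2)+4 by omega, tetra_add4, show j+2+3=j+5 by omega, show j+2+2=j+4 by omega,
    show j+2+1=j+3 by omega,
    show j+5=(j+1)+4 by omega, tetra_add4, show j+1+3=j+4 by omega, show j+1+2=j+3 by omega,
    show j+1+1=j+2 by omega, tetra_add4]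
  ring

def S (m : ℕ) : ℤ := ∑ k ∈ Finset.range (m+1), tetra k * W (m-k)

def R (m : ℕ) : ℤ := ((m:ℤ)+2)*tetra (m+3) - tetra (m+2) - 3*tetra (m+1)

lemma Rid (m : ℕ) : R (m+4) = R (m+3) + R (m+2) + R (m+1) + R m
    + 3 * tetra (m+1) + 4 * tetra (m+2) + 8 * tetra (m+3) + 7 * tetra (m+4) := by
  have h7 : tetra (m+7) = tetra (m+6) + tetra (m+5) + tetra (m+4) + tetra (m+3) := by
    rw [show m+7=(m+3)+4 by omega, tetra_add4, show m+3+3=m+6 by omega,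
      show m+3+2=m+5 by omega, show m+3+1=m+4 by omega]
  simp only [R, show m+4+3=m+7 by omega, show m+4+2=m+6 by omega, show m+4+1=m+5 by omega,
    show m+3+3=m+6 by omega, show m+3+2=m+5 by omega, show m+3+1=m+4 by omega,
    show m+2+3=m+5 by omega, show m+2+2=m+4 by omega, show m+2+1=m+3 by omega,
    show m+1+3=m+4 by omega, show m+1+2=m+3 by omega, show m+1+1=m+2 by omega]
  push_cast
  linear_combination ((m:ℤ)+6) * h7

lemma key (m : ℕ) : ∑ k ∈ Finset.range (m+1), tetra k * W (m+4-k)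
    = (∑ k ∈ Finset.range (m+1), tetra k * W (m+3-k))
    + (∑ k ∈ Finset.range (m+1), tetra k * W (m+2-k))
    + (∑ k ∈ Finset.range (m+1), tetra k * W (m+1-k))
    + (∑ k ∈ Finset.range (m+1), tetra k * W (m-k)) := by
  rw [← Finset.sum_add_distrib, ← Finset.sum_add_distrib, ← Finset.sum_add_distrib]
  apply Finset.sum_congr rfl
  intro k hk
  rw [Finset.mem_range] at hk
  rw [show m+4-k = (m-k)+4 by omega, show m+3-k = (m-k)+3 by omega,
    show m+2-k = (m-k)+2 by omega, show m+1-k = (m-k)+1 by omega, W_rec]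
  ring

lemma peel1 (m : ℕ) : S (m+1) = (∑ k ∈ Finset.range (m+1), tetra k * W (m+1-k))
    + tetra (m+1) * W 0 := by
  simp [S, Finset.sum_range_succ]

lemma peel2 (m : ℕ) : S (m+2) = (∑ k ∈ Finset.range (m+1), tetra k * W (m+2-k))
    + tetra (m+1) * W 1 + tetra (m+2) * W 0 := by
  simp [S, Finset.sum_range_succ, show m+2-(m+1)=1 by omega]

lemma peel3 (m : ℕ) : S (m+3) = (∑ k ∈ Finset.range (m+1), tetra k * W (m+3-k))
    + tetra (m+1) * W 2 + tetra (m+2) * W 1 + tetra (m+3) * W 0 := by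
  simp [S, Finset.sum_range_succ, show m+3-(m+1)=2 by omega, show m+3-(m+2)=1 by omega]

lemma peel4 (m : ℕ) : S (m+4) = (∑ k ∈ Finset.range (m+1), tetra k * W (m+4-k))
    + tetra (m+1) * W 3 + tetra (m+2) * W 2 + tetra (m+3) * W 1 + tetra (m+4) * W 0 := by
  simp [S, Finset.sum_range_succ, show m+4-(m+1)=3 by omega, show m+4-(m+2)=2 by omega,
    show m+4-(m+3)=1 by omega]

lemma W0 : W 0 = 7 := by norm_num [W, tetra]
lemma W1 : W 1 = 15 := by norm_num [W, tetra]
lemma W2 : W 2 = 26 := by norm_num [W, tetra]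
lemma W3 : W 3 = 51 := by norm_num [W, tetra]

lemma aux : ∀ m, S m = R m := by
  intro m
  induction m using Nat.strong_induction_on with
  | _ m ih =>
    obtain _|_|_|_|m := m
    · norm_num [S, R, W, tetra, Finset.sum_range_succ]
    · norm_num [S, R, W, tetra, Finset.sum_range_succ]
    · norm_num [S, R, W, tetra, Finset.sum_range_succ]
    · norm_num [S, R, W, tetra, Finset.sum_range_succ]
    · have i0 := ih m (by omega)
      have i1 := ih (m+1) (by omega)
      have i2 := ih (m+2) (by omega)
      have i3 := ih (m+3) (by omega)
      have hp4 := peel4 m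
      rw [key] at hp4
      have hp1 := peel1 m
      have hp2 := peel2 m
      have hp3 := peel3 m
      have hS0 : S m = ∑ k ∈ Finset.range (m+1), tetra k * W (m-k) := rfl
      rw [Rid]
      rw [W0] at *
      rw [W1] at *
      rw [W2] at *
      rw [W3] at *
      linarith [hp4, hp1, hp2, hp3, i0, i1, i2, i3]

theorem tetra_convolution (n : ℕ) (hn : 4 ≤ n) :
    ∑ k ∈ Finset.range (n - 4 + 1),
      tetra k * (tetra (n - k) + tetra (n - k - 2) + 2 * tetra (n - k - 3)
        + 3 * tetra (n - k - 4))
    = ((n : ℤ) - 2) * tetra (n - 1) - tetra (n - 2) - 3 * tetra (n - 3) := by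
  obtain ⟨m, rfl⟩ : ∃ m, n = m + 4 := ⟨n - 4, by omega⟩
  have h : ∑ k ∈ Finset.range (m + 4 - 4 + 1),
      tetra k * (tetra (m+4 - k) + tetra (m+4 - k - 2) + 2 * tetra (m+4 - k - 3)
        + 3 * tetra (m+4 - k - 4)) = S m := by
    rw [show m+4-4 = m by omega]
    apply Finset.sum_congr rfl
    intro k hk
    rw [Finset.mem_range] at hk
    rw [show m+4-k-4 = m-k by omega, show m+4-k-3 = (m-k)+1 by omega,
      show m+4-k-2 = (m-k)+2 by omega, show m+4-k = (m-k)+4 by omega]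
    rfl
  rw [h, aux m, show m+4-1 = m+3 by omega, show m+4-2 = m+2 by omega,
    show m+4-3 = m+1 by omega]
  simp only [R]
  push_cast
  ring
end

section
/- The formal power series identity (1 + x² + 2x³ + 3x⁴)·T(x)² = x²·T'(x) holds, where T(x) = Σ_{n≥0} T_n x^n is the ordinary generating function of the Tetranacci numbers. -/
open PowerSeries

lemma tetra_key : (1 - X - X^2 - X^3 - X^4 : ℤ⟦X⟧) * (PowerSeries.mk fun n => tetra n) = X := by
  have h : (1 - X - X^2 - X^3 - X^4 : ℤ⟦X⟧) * (PowerSeries.mk fun n => tetra n) =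
      (PowerSeries.mk fun n => tetra n) - X^1 * (PowerSeries.mk fun n => tetra n)
      - X^2 * (PowerSeries.mk fun n => tetra n) - X^3 * (PowerSeries.mk fun n => tetra n)
      - X^4 * (PowerSeries.mk fun n => tetra n) := by ring
  rw [h]
  ext n
  rcases n with _|_|_|_|n <;>
    simp [coeff_X, coeff_X_pow_mul', tetra, Nat.succ_sub_succ]
  ring

lemma tetra_hQ' : derivativeFun (1 - X - X^2 - X^3 - X^4 : ℤ⟦X⟧) =
    -1 - 2*X - 3*X^2 - 4*X^3 := by
  show d⁄dX ℤ (1 - X - X^2 - X^3 - X^4 : ℤ⟦X⟧) = -1 - 2*X - 3*X^2 - 4*X^3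
  simp [Derivation.leibniz_pow]

theorem tetra_gf_deriv_identity :
    (1 + (X : ℤ⟦X⟧) ^ 2 + 2 * X ^ 3 + 3 * X ^ 4) * (PowerSeries.mk fun n => tetra n) ^ 2
      = X ^ 2 * PowerSeries.derivativeFun (PowerSeries.mk fun n => tetra n) := by
  set T : ℤ⟦X⟧ := PowerSeries.mk fun n => tetra n with hT
  set Q : ℤ⟦X⟧ := 1 - X - X^2 - X^3 - X^4 with hQdef
  have k : Q * T = X := tetra_key
  have hQ0 : Q ≠ 0 := by
    intro h
    have := congrArg (constantCoeff : ℤ⟦X⟧ →+* ℤ) h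
    simp [hQdef] at this
  have hd : (-1 - 2*X - 3*X^2 - 4*X^3) * T + Q * derivativeFun T = 1 := by
    have h2 := congrArg derivativeFun tetra_key
    rw [derivativeFun_mul, tetra_hQ'] at h2
    have hX : derivativeFun (X : ℤ⟦X⟧) = 1 := derivative_X
    rw [hX] at h2
    rw [smul_eq_mul, smul_eq_mul] at h2
    rw [← hT, ← hQdef] at h2
    linear_combination h2
  apply mul_left_cancel₀ hQ0
  linear_combination (Q*T + X - X*(-1-2*X-3*X^2-4*X^3)*T) * k - X^2 * hd
end
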